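/- Let X be a real normed space and f : X → ℝ a function with f(0) = 0 such that |f(2x+y) + f(2x−y) − 4f(x+y) − 4f(x−y) − 2f(2x) + 8f(x) + 6f(y)| ≤ δ for all x, y ∈ X and some δ ≥ 0. Then, with g(x) := f(2x) − 16f(x), the sequence (g(2ⁿx)/4ⁿ) is Cauchy for every x ∈ X and converges to a function Q₁ : X → ℝ that satisfies the quadratic functional equation Q₁(x+y) + Q₁(x−y) = 2Q₁(x) + 2Q₁(y). -/
import Mathlib


theorem stmt_11 {X : Type*} [NormedAddCommGroup X] [NormedSpace ℝ X]
    (f : X → ℝ) (hf0 : f 0 = 0) (δ : ℝ) (hδ : 0 ≤ δ)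
    (hf : ∀ x y : X, |f ((2:ℝ) • x + y) + f ((2:ℝ) • x - y) - 4 * f (x + y) - 4 * f (x - y)
      - 2 * f ((2:ℝ) • x) + 8 * f x + 6 * f y| ≤ δ)
    (g : X → ℝ) (hg : ∀ x : X, g x = f ((2:ℝ) • x) - 16 * f x) :
    (∀ x : X, CauchySeq (fun n : ℕ => g (((2:ℝ)^n) • x) / 4 ^ n)) ∧
    ∃ Q₁ : X → ℝ,
      (∀ x : X, Filter.Tendsto (fun n : ℕ => g (((2:ℝ)^n) • x) / 4 ^ n)
        Filter.atTop (nhds (Q₁ x))) ∧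
      (∀ x y : X, Q₁ (x + y) + Q₁ (x - y) = 2 * Q₁ x + 2 * Q₁ y) := by
  -- g(0) = 0
  have hg0 : g 0 = 0 := by
    rw [hg, smul_zero, hf0]; ring
  -- Main approximate quadratic estimate for g
  have hB : ∀ x y : X, |g (x + y) + g (x - y) - 2 * g x - 2 * g y| ≤ 35 / 3 * δ := by
    intro x y
    have h1 := hf x ((2:ℝ) • y)
    rw [show (2:ℝ) • x + (2:ℝ) • y = (2:ℝ) • (x + y) from by module,
        show (2:ℝ) • x - (2:ℝ) • y = (2:ℝ) • (x - y) from by module] at h1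
    have h2 := hf y x
    rw [show (2:ℝ) • y + x = x + (2:ℝ) • y from by module,
        show y + x = x + y from by module] at h2
    have h3 := hf 0 (x - y)
    rw [show (2:ℝ) • (0:X) + (x - y) = x - y from by module,
        show (2:ℝ) • (0:X) - (x - y) = y - x from by module,
        show (0:X) + (x - y) = x - y from by module,
        show (0:X) - (x - y) = y - x from by module,
        show (2:ℝ) • (0:X) = 0 from by module, hf0] at h3
    have h4 := hf 0 (x - (2:ℝ) • y)
    rw [show (2:ℝ) • (0:X) + (x - (2:ℝ) • y) = x - (2:ℝ) • y from by module,
        show (2:ℝ) • (0:X) - (x - (2:ℝ) • y) = (2:ℝ) • y - x from by module,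
        show (0:X) + (x - (2:ℝ) • y) = x - (2:ℝ) • y from by module,
        show (0:X) - (x - (2:ℝ) • y) = (2:ℝ) • y - x from by module,
        show (2:ℝ) • (0:X) = 0 from by module, hf0] at h4
    rw [hg (x + y), hg (x - y), hg x, hg y]
    rw [abs_le] at h1 h2 h3 h4 ⊢
    obtain ⟨a1, b1⟩ := h1
    obtain ⟨a2, b2⟩ := h2
    obtain ⟨a3, b3⟩ := h3
    obtain ⟨a4, b4⟩ := h4
    constructor <;> linarith
  -- doubling estimate
  have hA : ∀ x : X, |g ((2:ℝ) • x) - 4 * g x| ≤ 35 / 3 * δ := by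
    intro x
    have := hB x x
    rw [show x + x = (2:ℝ) • x from by module, sub_self, hg0] at this
    calc |g ((2:ℝ) • x) - 4 * g x| = |g ((2:ℝ) • x) + 0 - 2 * g x - 2 * g x| := by ring_nf
      _ ≤ 35 / 3 * δ := this
  -- stepwise estimate for the sequence
  have hstep : ∀ (x : X) (n : ℕ),
      dist (g (((2:ℝ)^n) • x) / 4 ^ n) (g (((2:ℝ)^(n+1)) • x) / 4 ^ (n+1))
        ≤ (35 / 12 * δ) * (1/4) ^ n := by
    intro x n
    have key := hA (((2:ℝ)^n) • x)
    rw [smul_smul, show (2:ℝ) * 2 ^ n = 2 ^ (n+1) from by ring] at key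
    rw [Real.dist_eq]
    have h4n : (0:ℝ) < 4 ^ (n+1) := by positivity
    have heq : g (((2:ℝ)^n) • x) / 4 ^ n - g (((2:ℝ)^(n+1)) • x) / 4 ^ (n+1)
        = (4 * g (((2:ℝ)^n) • x) - g (((2:ℝ)^(n+1)) • x)) / 4 ^ (n+1) := by
      rw [pow_succ]; field_simp; ring
    rw [heq, abs_div, abs_of_pos h4n, div_le_iff₀ h4n]
    have habs : |4 * g (((2:ℝ)^n) • x) - g (((2:ℝ)^(n+1)) • x)| ≤ 35 / 3 * δ := by
      rw [abs_sub_comm]; exact key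
    have hpow : ((1:ℝ)/4)^n * 4^(n+1) = 4 := by
      rw [pow_succ, ← mul_assoc, ← mul_pow]; norm_num
    calc |4 * g (((2:ℝ)^n) • x) - g (((2:ℝ)^(n+1)) • x)| ≤ 35 / 3 * δ := habs
      _ = 35 / 12 * δ * (((1:ℝ)/4)^n * 4^(n+1)) := by rw [hpow]; ring
      _ = 35 / 12 * δ * (1/4) ^ n * 4 ^ (n+1) := by ring
  have hcauchy : ∀ x : X, CauchySeq (fun n : ℕ => g (((2:ℝ)^n) • x) / 4 ^ n) := by
    intro x
    exact cauchySeq_of_le_geometric (1/4) (35/12*δ) (by norm_num) (hstep x)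
  refine ⟨hcauchy, ?_⟩
  have hconv : ∀ x : X, ∃ L : ℝ, Filter.Tendsto (fun n : ℕ => g (((2:ℝ)^n) • x) / 4 ^ n)
      Filter.atTop (nhds L) := fun x => cauchySeq_tendsto_of_complete (hcauchy x)
  refine ⟨fun x => (hconv x).choose, fun x => (hconv x).choose_spec, ?_⟩
  intro x y
  set Q : X → ℝ := fun x => (hconv x).choose with hQ
  have hQt : ∀ x : X, Filter.Tendsto (fun n : ℕ => g (((2:ℝ)^n) • x) / 4 ^ n)
      Filter.atTop (nhds (Q x)) := fun x => (hconv x).choose_spec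
  -- the difference sequence tends to both 0 and Q(x+y)+Q(x-y)-2Qx-2Qy
  have ht1 : Filter.Tendsto (fun n : ℕ =>
      g (((2:ℝ)^n) • (x+y)) / 4 ^ n + g (((2:ℝ)^n) • (x-y)) / 4 ^ n
        - 2 * (g (((2:ℝ)^n) • x) / 4 ^ n) - 2 * (g (((2:ℝ)^n) • y) / 4 ^ n))
      Filter.atTop (nhds (Q (x+y) + Q (x-y) - 2 * Q x - 2 * Q y)) := by
    exact (((hQt (x+y)).add (hQt (x-y))).sub ((hQt x).const_mul 2)).sub ((hQt y).const_mul 2)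
  have ht0 : Filter.Tendsto (fun n : ℕ =>
      g (((2:ℝ)^n) • (x+y)) / 4 ^ n + g (((2:ℝ)^n) • (x-y)) / 4 ^ n
        - 2 * (g (((2:ℝ)^n) • x) / 4 ^ n) - 2 * (g (((2:ℝ)^n) • y) / 4 ^ n))
      Filter.atTop (nhds 0) := by
    have hlim : Filter.Tendsto (fun n : ℕ => (35/3*δ) * ((1:ℝ)/4)^n) Filter.atTop (nhds 0) := by
      have : Filter.Tendsto (fun n : ℕ => ((1:ℝ)/4)^n) Filter.atTop (nhds 0) :=
        tendsto_pow_atTop_nhds_zero_of_lt_one (by norm_num) (by norm_num)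
      simpa using this.const_mul (35/3*δ)
    refine squeeze_zero_norm (fun n => ?_) hlim
    have hb := hB (((2:ℝ)^n) • x) (((2:ℝ)^n) • y)
    rw [show ((2:ℝ)^n) • x + ((2:ℝ)^n) • y = ((2:ℝ)^n) • (x + y) from by module,
        show ((2:ℝ)^n) • x - ((2:ℝ)^n) • y = ((2:ℝ)^n) • (x - y) from by module] at hb
    have h4n : (0:ℝ) < 4 ^ n := by positivity
    have heq : g (((2:ℝ)^n) • (x+y)) / 4 ^ n + g (((2:ℝ)^n) • (x-y)) / 4 ^ n
        - 2 * (g (((2:ℝ)^n) • x) / 4 ^ n) - 2 * (g (((2:ℝ)^n) • y) / 4 ^ n)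
        = (g (((2:ℝ)^n) • (x+y)) + g (((2:ℝ)^n) • (x-y))
          - 2 * g (((2:ℝ)^n) • x) - 2 * g (((2:ℝ)^n) • y)) / 4 ^ n := by
      field_simp
    rw [Real.norm_eq_abs, heq, abs_div, abs_of_pos h4n, div_le_iff₀ h4n]
    have hpow : ((1:ℝ)/4)^n * 4^n = 1 := by
      rw [← mul_pow]; norm_num
    calc |g (((2:ℝ)^n) • (x+y)) + g (((2:ℝ)^n) • (x-y))
          - 2 * g (((2:ℝ)^n) • x) - 2 * g (((2:ℝ)^n) • y)| ≤ 35/3*δ := hb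
      _ = 35/3*δ * (((1:ℝ)/4)^n * 4^n) := by rw [hpow]; ring
      _ = 35/3*δ * ((1:ℝ)/4)^n * 4^n := by ring
  have := tendsto_nhds_unique ht1 ht0
  linarith [this]
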